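/- Let (M,d) be a complete metric space of diameter ≤ 1 and let Θ be the monoid of bi-Katětov functions on M² under the operation (f ∙ g)(x,y) = inf_z min(f(x,z)+g(z,y),1). An element p ∈ Θ with p ≥ d is idempotent if and only if p = b_F for some closed set F ⊆ M, where b_F(x,y) = inf_{z∈F} min(d(x,z)+d(z,y),1) for F non-empty and b_∅ ≡ 1. -/

import Mathlib

/-- The operation `(f ∙ g)(x,y) = inf_z min(f(x,z) + g(z,y), 1)`. -/
noncomputable def opK {M : Type*} [MetricSpace M] (f g : M × M → ℝ) : M × M → ℝ :=
  fun p => ⨅ z : M, min (f (p.1, z) + g (z, p.2)) 1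

/-- A bi-Katětov function on `M²`. -/
def IsBiKatetov {M : Type*} [MetricSpace M] (f : M × M → ℝ) : Prop :=
  (∀ p, f p ∈ Set.Icc (0 : ℝ) 1) ∧
  (∀ x y z : M, |f (x, y) - f (x, z)| ≤ dist y z ∧ dist y z ≤ f (x, y) + f (x, z)) ∧
  (∀ x y z : M, |f (y, x) - f (z, x)| ≤ dist y z ∧ dist y z ≤ f (y, x) + f (z, x))

/-- `b_F(x,y) = inf_{z ∈ F} min(d(x,z) + d(z,y), 1)`, equal to the constant `1` for `F = ∅`. -/
noncomputable def bIdem {M : Type*} [MetricSpace M] (F : Set M) : M × M → ℝ :=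
  fun p => sInf (insert 1 {r : ℝ | ∃ z ∈ F, r = min (dist p.1 z + dist z p.2) 1})

namespace Stmt16

variable {M : Type*} [MetricSpace M]

def bSet (F : Set M) (x y : M) : Set ℝ :=
  insert 1 {r : ℝ | ∃ z ∈ F, r = min (dist x z + dist z y) 1}

lemma bIdem_eq (F : Set M) (x y : M) : bIdem F (x, y) = sInf (bSet F x y) := rfl

lemma bSet_ne (F : Set M) (x y : M) : (bSet F x y).Nonempty := ⟨1, Set.mem_insert _ _⟩

lemma bSet_nonneg {F : Set M} {x y : M} {r : ℝ} (hr : r ∈ bSet F x y) : 0 ≤ r := by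
  rcases hr with rfl | ⟨z, hz, rfl⟩
  · norm_num
  · exact le_min (by positivity) zero_le_one

lemma bSet_bdd (F : Set M) (x y : M) : BddBelow (bSet F x y) :=
  ⟨0, fun r hr => bSet_nonneg hr⟩

lemma bIdem_le_one (F : Set M) (x y : M) : bIdem F (x, y) ≤ 1 :=
  csInf_le (bSet_bdd F x y) (Set.mem_insert _ _)

lemma bIdem_nonneg (F : Set M) (x y : M) : 0 ≤ bIdem F (x, y) :=
  le_csInf (bSet_ne F x y) fun _ hr => bSet_nonneg hr

lemma bIdem_le_elem {F : Set M} {z : M} (hz : z ∈ F) (x y : M) :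
    bIdem F (x, y) ≤ min (dist x z + dist z y) 1 :=
  csInf_le (bSet_bdd F x y) (Set.mem_insert_iff.2 (Or.inr ⟨z, hz, rfl⟩))

lemma dist_le_bIdem (hdiam : ∀ x y : M, dist x y ≤ 1) (F : Set M) (x y : M) :
    dist x y ≤ bIdem F (x, y) := by
  refine le_csInf (bSet_ne F x y) fun r hr => ?_
  rcases hr with rfl | ⟨z, hz, rfl⟩
  · exact hdiam x y
  · exact le_min (dist_triangle x z y) (hdiam x y)

lemma bSet_symm (F : Set M) (x y : M) : bSet F x y = bSet F y x := by
  ext r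
  simp only [bSet, Set.mem_insert_iff, Set.mem_setOf_eq]
  constructor <;> rintro (rfl | ⟨z, hz, rfl⟩)
  · exact Or.inl rfl
  · exact Or.inr ⟨z, hz, by rw [dist_comm x z, dist_comm z y, add_comm]⟩
  · exact Or.inl rfl
  · exact Or.inr ⟨z, hz, by rw [dist_comm y z, dist_comm z x, add_comm]⟩

lemma bIdem_symm (F : Set M) (x y : M) : bIdem F (x, y) = bIdem F (y, x) := by
  rw [bIdem_eq, bIdem_eq, bSet_symm]

lemma bIdem_lip2 (F : Set M) (x y y' : M) :
    bIdem F (x, y) ≤ bIdem F (x, y') + dist y y' := by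
  have h : bIdem F (x, y) - dist y y' ≤ sInf (bSet F x y') := by
    refine le_csInf (bSet_ne F x y') fun r hr => ?_
    rcases hr with rfl | ⟨z, hz, rfl⟩
    · have := bIdem_le_one F x y
      have := dist_nonneg (x := y) (y := y')
      linarith
    · have h1 : bIdem F (x, y) ≤ min (dist x z + dist z y) 1 := bIdem_le_elem hz x y
      have h2 : min (dist x z + dist z y) 1 ≤ min (dist x z + dist z y') 1 + dist y y' := by
        rcases le_total (dist x z + dist z y') 1 with h | h
        · rw [min_eq_left h]
          have h3 : dist z y ≤ dist z y' + dist y' y := dist_triangle z y' y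
          have h4 : min (dist x z + dist z y) 1 ≤ dist x z + dist z y := min_le_left _ _
          rw [dist_comm y' y] at h3
          linarith
        · rw [min_eq_right h]
          have h4 : min (dist x z + dist z y) 1 ≤ 1 := min_le_right _ _
          have := dist_nonneg (x := y) (y := y')
          linarith
      linarith
  rw [bIdem_eq F x y'] at *
  linarith

lemma bIdem_sum2 (hdiam : ∀ x y : M, dist x y ≤ 1) (F : Set M) (x y y' : M) :
    dist y y' ≤ bIdem F (x, y) + bIdem F (x, y') := by
  have key : ∀ r ∈ bSet F x y, ∀ r' ∈ bSet F x y', dist y y' ≤ r + r' := by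
    intro r hr r' hr'
    rcases hr with rfl | ⟨z, hz, rfl⟩
    · have := bSet_nonneg hr'
      have := hdiam y y'
      linarith
    rcases hr' with rfl | ⟨z', hz', rfl⟩
    · have : (0:ℝ) ≤ min (dist x z + dist z y) 1 := le_min (by positivity) zero_le_one
      have := hdiam y y'
      linarith
    rcases le_total 1 (dist x z + dist z y) with h | h
    · rw [min_eq_right h]
      have : (0:ℝ) ≤ min (dist x z' + dist z' y') 1 := le_min (by positivity) zero_le_one
      have := hdiam y y'
      linarith
    rcases le_total 1 (dist x z' + dist z' y') with h' | h'
    · rw [min_eq_right h']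
      have : (0:ℝ) ≤ min (dist x z + dist z y) 1 := le_min (by positivity) zero_le_one
      have := hdiam y y'
      linarith
    rw [min_eq_left h, min_eq_left h']
    have t1 : dist y y' ≤ dist y z + dist z y' := dist_triangle y z y'
    have t2 : dist z y' ≤ dist z x + dist x y' := dist_triangle z x y'
    have t3 : dist x y' ≤ dist x z' + dist z' y' := dist_triangle x z' y'
    rw [dist_comm y z] at t1
    rw [dist_comm z x] at t2
    linarith
  have h1 : dist y y' - bIdem F (x, y') ≤ sInf (bSet F x y) := by
    refine le_csInf (bSet_ne F x y) fun r hr => ?_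
    have h2 : dist y y' - r ≤ sInf (bSet F x y') :=
      le_csInf (bSet_ne F x y') fun r' hr' => by linarith [key r hr r' hr']
    rw [bIdem_eq]; linarith
  rw [bIdem_eq F x y] ; linarith

lemma bIdem_isBiKatetov (hdiam : ∀ x y : M, dist x y ≤ 1) (F : Set M) :
    IsBiKatetov (bIdem F) := by
  refine ⟨fun q => ⟨bIdem_nonneg F q.1 q.2, bIdem_le_one F q.1 q.2⟩, fun x y z => ⟨?_, ?_⟩,
    fun x y z => ⟨?_, ?_⟩⟩
  · rw [abs_sub_le_iff]
    refine ⟨by linarith [bIdem_lip2 F x y z], ?_⟩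
    have h := bIdem_lip2 F x z y
    have hc : dist z y = dist y z := dist_comm z y
    linarith
  · exact bIdem_sum2 hdiam F x y z
  · rw [abs_sub_le_iff]
    rw [bIdem_symm F y x, bIdem_symm F z x]
    refine ⟨by linarith [bIdem_lip2 F x y z], ?_⟩
    have h := bIdem_lip2 F x z y
    have hc : dist z y = dist y z := dist_comm z y
    linarith
  · rw [bIdem_symm F y x, bIdem_symm F z x]
    exact bIdem_sum2 hdiam F x y z

lemma bIdem_le_dist (hdiam : ∀ x y : M, dist x y ≤ 1) {F : Set M} {z : M} (hz : z ∈ F)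
    (x : M) : bIdem F (x, z) ≤ dist x z := by
  have := bIdem_le_elem hz x z
  rw [dist_self, add_zero, min_eq_left (hdiam x z)] at this
  exact this

lemma bIdem_idem (hdiam : ∀ x y : M, dist x y ≤ 1) (F : Set M) :
    opK (bIdem F) (bIdem F) = bIdem F := by
  funext q
  obtain ⟨x, y⟩ := q
  have : Nonempty M := ⟨x⟩
  have bdd : BddBelow (Set.range fun z => min (bIdem F (x, z) + bIdem F (z, y)) 1) := by
    refine ⟨0, ?_⟩
    rintro _ ⟨z, rfl⟩
    exact le_min (add_nonneg (bIdem_nonneg F x _) (bIdem_nonneg F _ y)) zero_le_one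
  simp only [opK]
  apply le_antisymm
  · refine le_csInf (bSet_ne F x y) fun r hr => ?_
    rcases hr with rfl | ⟨z, hz, rfl⟩
    · exact (ciInf_le bdd x).trans (min_le_right _ _)
    · refine (ciInf_le bdd z).trans (min_le_min (add_le_add ?_ ?_) le_rfl)
      · exact bIdem_le_dist hdiam hz x
      · rw [bIdem_symm]
        rw [dist_comm]
        exact bIdem_le_dist hdiam hz y
  · refine le_ciInf fun z => le_min ?_ (bIdem_le_one F x y)
    have h1 := bIdem_lip2 F x y z
    have h2 := dist_le_bIdem hdiam F z y
    rw [dist_comm y z] at h1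
    linarith


section Forward
variable {p : M × M → ℝ}

lemma p_tmin (hp : IsBiKatetov p) (hidem : opK p p = p) (a b c : M) :
    p (a, c) ≤ min (p (a, b) + p (b, c)) 1 := by
  have hne : Nonempty M := ⟨a⟩
  have bdd : BddBelow (Set.range fun u => min (p (a, u) + p (u, c)) 1) := by
    refine ⟨0, ?_⟩
    rintro _ ⟨u, rfl⟩
    exact le_min (add_nonneg (hp.1 _).1 (hp.1 _).1) zero_le_one
  have h : (⨅ u : M, min (p (a, u) + p (u, c)) 1) = p (a, c) := congrFun hidem (a, c)
  calc p (a, c) = ⨅ u : M, min (p (a, u) + p (u, c)) 1 := h.symm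
    _ ≤ min (p (a, b) + p (b, c)) 1 := ciInf_le bdd b

lemma bIdem_le_p (hdiam : ∀ x y : M, dist x y ≤ 1) [CompleteSpace M]
    (hp : IsBiKatetov p) (hd : ∀ q : M × M, dist q.1 q.2 ≤ p q) (hidem : opK p p = p)
    (x y : M) : bIdem {w : M | p (w, w) = 0} (x, y) ≤ p (x, y) := by
  classical
  have hne : Nonempty M := ⟨x⟩
  have p0 : ∀ q, 0 ≤ p q := fun q => (hp.1 q).1
  have p1 : ∀ q, p q ≤ 1 := fun q => (hp.1 q).2
  have lip2 : ∀ a b c : M, |p (a, b) - p (a, c)| ≤ dist b c := fun a b c => (hp.2.1 a b c).1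
  have lip1 : ∀ a b c : M, |p (b, a) - p (c, a)| ≤ dist b c := fun a b c => (hp.2.2 a b c).1
  have tri : ∀ a b c : M, p (a, c) ≤ p (a, b) + p (b, c) :=
    fun a b c => (p_tmin hp hidem a b c).trans (min_le_left _ _)
  -- suffices to prove the bound up to 2ε
  have key : ∀ ε : ℝ, 0 < ε → bIdem {w : M | p (w, w) = 0} (x, y) ≤ p (x, y) + 2 * ε := by
    intro ε hε
    have approx : ∀ (a : M) (n : ℕ), ∃ u : M,
        min (p (a, u) + p (u, y)) 1 < p (a, y) + ε * (1/2) ^ (n + 1) := by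
      intro a n
      have h : (⨅ u : M, min (p (a, u) + p (u, y)) 1) = p (a, y) := congrFun hidem (a, y)
      have hlt : (⨅ u : M, min (p (a, u) + p (u, y)) 1) < p (a, y) + ε * (1/2) ^ (n + 1) := by
        rw [h]
        have : (0:ℝ) < ε * (1/2) ^ (n + 1) := by positivity
        linarith
      exact exists_lt_of_ciInf_lt hlt
    choose step hstep using approx
    let z : ℕ → M := fun n => Nat.rec x (fun k zk => step zk k) n
    have hz0 : z 0 = x := rfl
    have hkey : ∀ n, min (p (z n, z (n + 1)) + p (z (n + 1), y)) 1
        < p (z n, y) + ε * (1/2) ^ (n + 1) := fun n => hstep (z n) n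
    -- invariant, assuming all earlier steps are "good"
    have claim : ∀ n : ℕ,
        (∀ k < n, p (z k, z (k + 1)) + p (z (k + 1), y) < p (z k, y) + ε * (1/2) ^ (k + 1)) →
        (∑ i ∈ Finset.range n, p (z i, z (i + 1))) + p (z n, y)
          ≤ p (x, y) + ε * (1 - (1/2) ^ n) := by
      intro n
      induction n with
      | zero => intro _; simp [hz0]
      | succ n ih =>
        intro h
        have hC := ih fun k hk => h k (hk.trans (Nat.lt_succ_self n))
        have hgn := h n (Nat.lt_succ_self n)
        rw [Finset.sum_range_succ]
        have hps : ε * (1 - (1/2) ^ (n + 1)) = ε * (1 - (1/2) ^ n) + ε * (1/2) ^ (n + 1) := by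
          rw [pow_succ]; ring
        linarith
    by_cases hg : ∀ n, p (z n, z (n + 1)) + p (z (n + 1), y) < p (z n, y) + ε * (1/2) ^ (n + 1)
    · -- all steps good: build the Cauchy sequence
      have hC : ∀ n, (∑ i ∈ Finset.range n, p (z i, z (i + 1))) + p (z n, y)
          ≤ p (x, y) + ε * (1 - (1/2) ^ n) := fun n => claim n fun k _ => hg k
      have hsumle : ∀ n, (∑ i ∈ Finset.range n, p (z i, z (i + 1))) ≤ p (x, y) + ε := by
        intro n
        have h1 := hC n
        have h2 : (0:ℝ) ≤ ε * (1/2) ^ n := by positivity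
        have h3 := p0 (z n, y)
        linarith
      have hsum : Summable fun n => p (z n, z (n + 1)) :=
        summable_of_sum_range_le (fun n => p0 _) hsumle
      have hcauchy : CauchySeq z :=
        cauchySeq_of_dist_le_of_summable _ (fun n => hd (z n, z (n + 1))) hsum
      obtain ⟨w, hw⟩ := cauchySeq_tendsto_of_complete hcauchy
      have hdz : Filter.Tendsto (fun n => dist (z n) w) Filter.atTop (nhds 0) :=
        tendsto_iff_dist_tendsto_zero.1 hw
      have ht0 : Filter.Tendsto (fun n => p (z n, z (n + 1))) Filter.atTop (nhds 0) :=
        hsum.tendsto_atTop_zero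
      -- w ∈ F
      have hub : ∀ n : ℕ, p (w, w) ≤ p (z n, z (n + 1)) + p (z (n + 1), z (n + 2))
          + dist (z n) w + dist (z (n + 2)) w := by
        intro n
        have h1 : p (w, z (n + 1)) - p (z n, z (n + 1)) ≤ dist w (z n) :=
          (abs_sub_le_iff.1 (lip1 (z (n + 1)) w (z n))).1
        have h2 : p (z (n + 1), w) - p (z (n + 1), z (n + 2)) ≤ dist w (z (n + 2)) :=
          (abs_sub_le_iff.1 (lip2 (z (n + 1)) w (z (n + 2)))).1
        have h3 : p (w, w) ≤ p (w, z (n + 1)) + p (z (n + 1), w) := tri w (z (n + 1)) w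
        have e1 : dist w (z n) = dist (z n) w := dist_comm _ _
        have e2 : dist w (z (n + 2)) = dist (z (n + 2)) w := dist_comm _ _
        linarith
      have hbt : Filter.Tendsto (fun n : ℕ => p (z n, z (n + 1)) + p (z (n + 1), z (n + 2))
          + dist (z n) w + dist (z (n + 2)) w) Filter.atTop (nhds 0) := by
        have h1 : Filter.Tendsto (fun n : ℕ => p (z (n + 1), z (n + 2))) Filter.atTop (nhds 0) := by
          have := ht0.comp (Filter.tendsto_add_atTop_nat 1)
          exact this
        have h2 : Filter.Tendsto (fun n : ℕ => dist (z (n + 2)) w) Filter.atTop (nhds 0) := by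
          have := hdz.comp (Filter.tendsto_add_atTop_nat 2)
          exact this
        have := ((ht0.add h1).add hdz).add h2
        simpa using this
      have hww : p (w, w) = 0 :=
        le_antisymm (ge_of_tendsto hbt (Filter.Eventually.of_forall hub)) (p0 _)
      -- p(x,w) + p(w,y) ≤ p(x,y) + ε
      have chain : ∀ n : ℕ, p (x, z (n + 1)) ≤ ∑ i ∈ Finset.range (n + 1), p (z i, z (i + 1)) := by
        intro n
        induction n with
        | zero => simp [Finset.sum_range_one]; exact le_of_eq (by rw [hz0])
        | succ n ih =>
          have h1 : p (x, z (n + 2)) ≤ p (x, z (n + 1)) + p (z (n + 1), z (n + 2)) :=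
            tri x (z (n + 1)) (z (n + 2))
          rw [Finset.sum_range_succ]
          linarith
      have hfin : ∀ n : ℕ, p (x, w) + p (w, y) ≤ p (x, y) + ε + 2 * dist (z (n + 1)) w := by
        intro n
        have h1 : p (x, w) - p (x, z (n + 1)) ≤ dist w (z (n + 1)) :=
          (abs_sub_le_iff.1 (lip2 x w (z (n + 1)))).1
        have h2 : p (w, y) - p (z (n + 1), y) ≤ dist w (z (n + 1)) :=
          (abs_sub_le_iff.1 (lip1 y w (z (n + 1)))).1
        have h3 := hC (n + 1)
        have h4 := chain n
        have h5 : (0:ℝ) ≤ ε * (1/2) ^ (n + 1) := by positivity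
        have e1 : dist w (z (n + 1)) = dist (z (n + 1)) w := dist_comm _ _
        linarith
      have hft : Filter.Tendsto (fun n : ℕ => p (x, y) + ε + 2 * dist (z (n + 1)) w)
          Filter.atTop (nhds (p (x, y) + ε)) := by
        have h2 : Filter.Tendsto (fun n : ℕ => dist (z (n + 1)) w) Filter.atTop (nhds 0) := by
          have := hdz.comp (Filter.tendsto_add_atTop_nat 1)
          exact this
        have := (tendsto_const_nhds (x := p (x, y) + ε) (f := Filter.atTop (α := ℕ))).add
          (h2.const_mul 2)
        simpa using this
      have hxw : p (x, w) + p (w, y) ≤ p (x, y) + ε :=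
        ge_of_tendsto hft (Filter.Eventually.of_forall hfin)
      have hb : bIdem {w : M | p (w, w) = 0} (x, y) ≤ min (dist x w + dist w y) 1 :=
        bIdem_le_elem (show w ∈ {w : M | p (w, w) = 0} from hww) x y
      have hdx : dist x w ≤ p (x, w) := hd (x, w)
      have hdy : dist w y ≤ p (w, y) := hd (w, y)
      have := min_le_left (dist x w + dist w y) 1
      linarith
    · -- some step is bad: p(x,y) is nearly 1
      have hex : ∃ n, ¬ (p (z n, z (n + 1)) + p (z (n + 1), y)
          < p (z n, y) + ε * (1/2) ^ (n + 1)) := not_forall.1 hg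
      set n₀ := Nat.find hex with hn₀
      have hbad := Nat.find_spec hex
      have hmin : ∀ k < n₀, p (z k, z (k + 1)) + p (z (k + 1), y)
          < p (z k, y) + ε * (1/2) ^ (k + 1) := fun k hk => not_not.1 (Nat.find_min hex hk)
      have h1lt : 1 < p (z n₀, y) + ε * (1/2) ^ (n₀ + 1) := by
        rcases min_lt_iff.1 (hkey n₀) with h | h
        · exact absurd h hbad
        · exact h
      have hinv : p (z n₀, y) ≤ p (x, y) + ε := by
        have h1 := claim n₀ hmin
        have h2 : (0:ℝ) ≤ ∑ i ∈ Finset.range n₀, p (z i, z (i + 1)) :=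
          Finset.sum_nonneg fun i _ => p0 _
        have h3 : (0:ℝ) ≤ ε * (1/2) ^ n₀ := by positivity
        linarith
      have hq : ε * (1/2) ^ (n₀ + 1) ≤ ε := by
        have : ((1:ℝ)/2) ^ (n₀ + 1) ≤ 1 := pow_le_one₀ (by norm_num) (by norm_num)
        nlinarith
      have := bIdem_le_one {w : M | p (w, w) = 0} x y
      linarith
  refine le_of_forall_pos_le_add fun η hη => ?_
  have := key (η / 2) (by positivity)
  linarith

end Forward

lemma p_le_bIdem {p : M × M → ℝ} (hp : IsBiKatetov p) (hidem : opK p p = p) (x y : M) :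
    p (x, y) ≤ bIdem {w : M | p (w, w) = 0} (x, y) := by
  refine le_csInf (bSet_ne _ x y) fun r hr => ?_
  rcases hr with rfl | ⟨z, hz, rfl⟩
  · exact (hp.1 _).2
  · have hz0 : p (z, z) = 0 := hz
    have h1 : p (x, z) ≤ dist x z := by
      have := (hp.2.2 z x z).1
      rw [hz0, sub_zero] at this
      exact (le_of_abs_le this)
    have h2 : p (z, y) ≤ dist z y := by
      have := (hp.2.1 z y z).1
      rw [hz0, sub_zero] at this
      have := le_of_abs_le this
      rw [dist_comm y z] at this
      exact this
    exact (p_tmin hp hidem x z y).trans (min_le_min (add_le_add h1 h2) le_rfl)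

lemma F_closed {p : M × M → ℝ} (hp : IsBiKatetov p) :
    IsClosed {w : M | p (w, w) = 0} := by
  have hcont : Continuous fun w : M => p (w, w) := by
    refine (LipschitzWith.of_dist_le_mul (K := 2) fun w v => ?_).continuous
    have h1 := (hp.2.1 w w v).1
    have h2 := (hp.2.2 v w v).1
    have h3 : |p (w, w) - p (v, v)| ≤ |p (w, w) - p (w, v)| + |p (w, v) - p (v, v)| :=
      abs_sub_le _ _ _
    rw [Real.dist_eq]
    rw [dist_comm w v] at h2
    push_cast
    have hd : dist w v = dist v w := dist_comm _ _
    linarith [abs_nonneg (p (w, w) - p (w, v))]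
  exact isClosed_eq hcont continuous_const

end Stmt16


/-- Each `b_F` (for `F ⊆ M` closed) is an idempotent `≥ d` in `Θ`, and an
element `p ≥ d` of `Θ` is idempotent iff `p = b_F` for some closed `F ⊆ M`. -/
theorem stmt_16 {M : Type*} [MetricSpace M] [CompleteSpace M]
    (hdiam : ∀ x y : M, dist x y ≤ 1) :
    (∀ F : Set M, IsClosed F → IsBiKatetov (bIdem F) ∧
      (fun p : M × M => dist p.1 p.2) ≤ bIdem F ∧ opK (bIdem F) (bIdem F) = bIdem F) ∧
    ∀ p : M × M → ℝ, IsBiKatetov p → (fun q : M × M => dist q.1 q.2) ≤ p →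
      (opK p p = p ↔ ∃ F : Set M, IsClosed F ∧ p = bIdem F) := by
  constructor
  · intro F _
    exact ⟨Stmt16.bIdem_isBiKatetov hdiam F,
      fun q => Stmt16.dist_le_bIdem hdiam F q.1 q.2, Stmt16.bIdem_idem hdiam F⟩
  · intro p hp hd
    constructor
    · intro hidem
      refine ⟨{w : M | p (w, w) = 0}, Stmt16.F_closed hp, ?_⟩
      funext q
      obtain ⟨x, y⟩ := q
      exact le_antisymm (Stmt16.p_le_bIdem hp hidem x y)
        (Stmt16.bIdem_le_p hdiam hp (fun q => hd q) hidem x y)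
    · rintro ⟨F, _, rfl⟩
      exact Stmt16.bIdem_idem hdiam F
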